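/- Let G be a finite simple connected graph on n vertices. Then σ⁻(G) = ⌈n/2⌉·⌊n/2⌋ if and only if G = K_n. -/

import Mathlib

open scoped Classical

variable {V : Type*}

namespace PSG

/-- A bipartition of the vertex set given by `A` and its complement is
near-balanced (a parity-partition) if the sizes differ by at most 1. -/
def Balanced [Fintype V] [DecidableEq V] (A : Finset V) : Prop :=
  |(A.card : ℤ) - ((Aᶜ : Finset V).card : ℤ)| ≤ 1

/-- The number of edges of `G` between `A` and its complement
(the number of negative edges of the associated parity signature). -/
def cut [Fintype V] [DecidableEq V] (G : SimpleGraph V) [DecidableRel G.Adj]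
    (A : Finset V) : ℕ :=
  ((A ×ˢ (Aᶜ : Finset V)).filter fun p => G.Adj p.1 p.2).card

/-- `Σ⁻(G)`: the set of numbers of negative edges over all parity signatures. -/
def sigmaSet [Fintype V] [DecidableEq V] (G : SimpleGraph V) [DecidableRel G.Adj] :
    Set ℕ :=
  {k | ∃ A : Finset V, Balanced A ∧ k = cut G A}

/-- The rna number `σ⁻(G)`. -/
noncomputable def rna [Fintype V] [DecidableEq V] (G : SimpleGraph V)
    [DecidableRel G.Adj] : ℕ :=
  sInf (sigmaSet G)

/-- `d⁻(v)`: number of negative edges (crossing edges) at `v`. -/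
def dneg [Fintype V] [DecidableEq V] (G : SimpleGraph V) [DecidableRel G.Adj]
    (A : Finset V) (v : V) : ℕ :=
  (Finset.univ.filter fun u => G.Adj v u ∧ ¬(u ∈ A ↔ v ∈ A)).card

/-- `d⁺(v)`: number of positive edges (same-side edges) at `v`. -/
def dpos [Fintype V] [DecidableEq V] (G : SimpleGraph V) [DecidableRel G.Adj]
    (A : Finset V) (v : V) : ℕ :=
  (Finset.univ.filter fun u => G.Adj v u ∧ (u ∈ A ↔ v ∈ A)).card

/-- The sign-difference `dᐃ(v) = d⁻(v) - d⁺(v)`. -/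
def dDelta [Fintype V] [DecidableEq V] (G : SimpleGraph V) [DecidableRel G.Adj]
    (A : Finset V) (v : V) : ℤ :=
  (dneg G A v : ℤ) - (dpos G A v : ℤ)

/-- `f` is a parity-labeling witnessing that `σ` is a parity-signature of `G`. -/
def IsParityLabeling [Fintype V] (G : SimpleGraph V) (σ : V → V → ℤ)
    (f : V ≃ Fin (Fintype.card V)) : Prop :=
  ∀ u v : V, G.Adj u v →
    σ u v = if ((f u : ℕ) % 2 = (f v : ℕ) % 2) then 1 else -1

/-- `(G, σ)` is a parity signed graph. -/
def IsParitySigned [Fintype V] (G : SimpleGraph V) (σ : V → V → ℤ) : Prop :=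
  ∃ f : V ≃ Fin (Fintype.card V), IsParityLabeling G σ f

/-- The sign multiplier of a switch at the vertex set `U`. -/
def sgn [DecidableEq V] (U : Finset V) (v : V) : ℤ := if v ∈ U then -1 else 1

/-- The signature obtained from `σ` by switching at the set of vertices `U`. -/
def switch [DecidableEq V] (σ : V → V → ℤ) (U : Finset V) : V → V → ℤ :=
  fun a b => sgn U a * sgn U b * σ a b

/-- One parity-switch step: switch at a vertex with odd label and one with even label. -/
def ParitySwitchStep [Fintype V] [DecidableEq V] (G : SimpleGraph V)
    (σ σ' : V → V → ℤ) : Prop :=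
  ∃ f : V ≃ Fin (Fintype.card V), IsParityLabeling G σ f ∧
    ∃ u v : V, (f u : ℕ) % 2 = 1 ∧ (f v : ℕ) % 2 = 0 ∧ σ' = switch σ {u, v}

/-- `G` is the star `K_{1,n-1}` on its vertex set. -/
def IsStar (G : SimpleGraph V) : Prop :=
  ∃ c : V, ∀ a b : V, G.Adj a b ↔ ((a = c ∧ b ≠ c) ∨ (b = c ∧ a ≠ c))

/-- The unordered pair `{a,b}` equals the unordered pair `{u,v}`. -/
def pairEq (a b u v : V) : Prop := (a = u ∧ b = v) ∨ (a = v ∧ b = u)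

/-- `G` is the complete graph minus one edge. -/
def IsCompleteMinusEdge (G : SimpleGraph V) : Prop :=
  ∃ u v : V, u ≠ v ∧ ∀ a b : V, G.Adj a b ↔ (a ≠ b ∧ ¬ pairEq a b u v)

/-- `G` is the complete graph minus the three edges of a triangle. -/
def IsCompleteMinusTriangle (G : SimpleGraph V) : Prop :=
  ∃ u v w : V, u ≠ v ∧ u ≠ w ∧ v ≠ w ∧
    ∀ a b : V, G.Adj a b ↔
      (a ≠ b ∧ ¬ (pairEq a b u v ∨ pairEq a b u w ∨ pairEq a b v w))

/-- `G` is the complete graph minus two nonadjacent (disjoint) edges. -/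
def IsCompleteMinusTwoDisjointEdges (G : SimpleGraph V) : Prop :=
  ∃ u v x y : V, u ≠ v ∧ x ≠ y ∧ u ≠ x ∧ u ≠ y ∧ v ≠ x ∧ v ≠ y ∧
    ∀ a b : V, G.Adj a b ↔ (a ≠ b ∧ ¬ (pairEq a b u v ∨ pairEq a b x y))

/-- `G` is the complete graph minus two adjacent edges. -/
def IsCompleteMinusTwoAdjacentEdges (G : SimpleGraph V) : Prop :=
  ∃ u v w : V, u ≠ v ∧ u ≠ w ∧ v ≠ w ∧
    ∀ a b : V, G.Adj a b ↔ (a ≠ b ∧ ¬ (pairEq a b u v ∨ pairEq a b u w))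

/-- `G` is the join `P₂ ∨ I_{n-2}`: an edge joined completely to an independent set. -/
def IsEdgeJoinIndep (G : SimpleGraph V) : Prop :=
  ∃ a b : V, a ≠ b ∧
    ∀ x y : V, G.Adj x y ↔ (x ≠ y ∧ (x = a ∨ x = b ∨ y = a ∨ y = b))

lemma bal_prod [Fintype V] [DecidableEq V] (A : Finset V) (h : Balanced A) :
    A.card * (Aᶜ : Finset V).card =
      ((Fintype.card V + 1) / 2) * (Fintype.card V / 2) := by
  have hc : A.card + (Aᶜ : Finset V).card = Fintype.card V :=
    Finset.card_add_card_compl A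
  unfold Balanced at h
  rw [abs_le] at h
  have : (A.card = (Fintype.card V + 1) / 2 ∧
      (Aᶜ : Finset V).card = Fintype.card V / 2) ∨
      (A.card = Fintype.card V / 2 ∧
      (Aᶜ : Finset V).card = (Fintype.card V + 1) / 2) := by omega
  rcases this with ⟨h1, h2⟩ | ⟨h1, h2⟩
  · rw [h1, h2]
  · rw [h1, h2, Nat.mul_comm]

lemma cut_le [Fintype V] [DecidableEq V] (G : SimpleGraph V) [DecidableRel G.Adj]
    (A : Finset V) : cut G A ≤ A.card * (Aᶜ : Finset V).card := by
  calc cut G A ≤ (A ×ˢ (Aᶜ : Finset V)).card := Finset.card_filter_le _ _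
    _ = A.card * (Aᶜ : Finset V).card := Finset.card_product _ _

lemma exists_balanced [Fintype V] [DecidableEq V] : ∃ A : Finset V, Balanced A := by
  obtain ⟨A, _, hA⟩ := Finset.exists_subset_card_eq (s := (Finset.univ : Finset V))
    (n := Fintype.card V / 2) (by simp [Finset.card_univ, Nat.div_le_self])
  refine ⟨A, ?_⟩
  have hc : A.card + (Aᶜ : Finset V).card = Fintype.card V :=
    Finset.card_add_card_compl A
  unfold Balanced
  rw [abs_le]
  omega

lemma exists_balanced_sep [Fintype V] [DecidableEq V] {u v : V} (huv : u ≠ v) :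
    ∃ A : Finset V, Balanced A ∧ u ∈ A ∧ v ∉ A := by
  have hn : 2 ≤ Fintype.card V := Fintype.one_lt_card_iff_nontrivial.2 ⟨u, v, huv⟩
  have hcard : (Finset.univ \ {u, v} : Finset V).card = Fintype.card V - 2 := by
    rw [Finset.card_sdiff_of_subset (by simp), Finset.card_univ, Finset.card_pair huv]
  obtain ⟨B, hBsub, hBcard⟩ := Finset.exists_subset_card_eq
    (s := (Finset.univ \ {u, v} : Finset V)) (n := Fintype.card V / 2 - 1)
    (by rw [hcard]; omega)
  have huB : u ∉ B := fun h => by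
    have := hBsub h; simp [Finset.mem_sdiff] at this
  have hvB : v ∉ B := fun h => by
    have := hBsub h; simp [Finset.mem_sdiff] at this
  refine ⟨insert u B, ?_, Finset.mem_insert_self _ _, ?_⟩
  · have hA : (insert u B).card = Fintype.card V / 2 := by
      rw [Finset.card_insert_of_notMem huB, hBcard]; omega
    have hc : (insert u B).card + ((insert u B)ᶜ : Finset V).card = Fintype.card V :=
      Finset.card_add_card_compl _
    unfold Balanced
    rw [abs_le]
    omega
  · simp [Finset.mem_insert, huv.symm, hvB]

/-- `σ⁻(G) = ⌈n/2⌉·⌊n/2⌋` iff `G = K_n`. -/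
theorem stmt10 [Fintype V] [DecidableEq V] (G : SimpleGraph V) [DecidableRel G.Adj]
    (hconn : G.Connected) :
    rna G = ((Fintype.card V + 1) / 2) * (Fintype.card V / 2) ↔ G = ⊤ := by
  constructor
  · intro hrna
    by_contra hne
    -- there exist distinct non-adjacent vertices
    have : ∃ u v : V, u ≠ v ∧ ¬ G.Adj u v := by
      by_contra h
      push_neg at h
      apply hne
      ext a b
      simp only [SimpleGraph.top_adj]
      exact ⟨fun hab => hab.ne, fun hab => h a b hab⟩
    obtain ⟨u, v, huv, hnadj⟩ := this
    obtain ⟨A, hbal, huA, hvA⟩ := exists_balanced_sep huv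
    have hvc : v ∈ (Aᶜ : Finset V) := Finset.mem_compl.2 hvA
    have hmem : (u, v) ∈ A ×ˢ (Aᶜ : Finset V) := Finset.mem_product.2 ⟨huA, hvc⟩
    have hlt : cut G A < A.card * (Aᶜ : Finset V).card := by
      rw [← Finset.card_product]
      apply Finset.card_lt_card
      refine ⟨Finset.filter_subset _ _, fun hsub => ?_⟩
      have := hsub hmem
      rw [Finset.mem_filter] at this
      exact hnadj this.2
    have hin : cut G A ∈ sigmaSet G := ⟨A, hbal, rfl⟩
    have := Nat.sInf_le hin
    rw [show sInf (sigmaSet G) = rna G from rfl, hrna, ← bal_prod A hbal] at this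
    omega
  · intro hG
    subst hG
    obtain ⟨A, hbal⟩ := exists_balanced (V := V)
    have hcut : ∀ B : Finset V, Balanced B →
        cut (⊤ : SimpleGraph V) B =
          ((Fintype.card V + 1) / 2) * (Fintype.card V / 2) := by
      intro B hB
      rw [← bal_prod B hB, ← Finset.card_product]
      unfold cut
      congr 1
      apply Finset.filter_true_of_mem
      intro p hp
      rw [Finset.mem_product] at hp
      have : p.1 ≠ p.2 := fun h => (Finset.mem_compl.1 hp.2) (h ▸ hp.1)
      simpa using this
    have hne : (sigmaSet (⊤ : SimpleGraph V)).Nonempty :=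
      ⟨cut (⊤ : SimpleGraph V) A, A, hbal, rfl⟩
    have hmem := Nat.sInf_mem hne
    obtain ⟨B, hB, hBeq⟩ := hmem
    unfold rna
    rw [hBeq, hcut B hB]

end PSG
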